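/- Fix an integer m ≥ 2 and let P_m = (V, E) be the path with vertex set V = {1, 2, …, m} and hyperedges e_i = {i, i+1} for i = 1, …, m−1. Then the minimum weight of an edge-discriminator on P_m equals ⌈m(m−1)/4⌉; that is, there exists an edge-discriminator of weight ⌈m(m−1)/4⌉, and every edge-discriminator on P_m has weight at least ⌈m(m−1)/4⌉. -/

import Mathlib

/-- `lam` is an edge-discriminator on the hypergraph with hyperedge family `E`
(vertices are natural numbers). -/
def IsEdgeDiscriminator (E : Finset (Finset ℕ)) (lam : ℕ → ℕ) : Prop :=
  (∀ e ∈ E, 0 < ∑ v ∈ e, lam v) ∧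
  (∀ e ∈ E, ∀ f ∈ E, e ≠ f → ∑ v ∈ e, lam v ≠ ∑ v ∈ f, lam v)

/-- The edge set of the path on vertices `{1, …, m}`. -/
def pathEdges (m : ℕ) : Finset (Finset ℕ) :=
  (Finset.Icc 1 (m - 1)).image (fun i => ({i, i + 1} : Finset ℕ))

/-- Invariant carried through the construction. -/
def PathInv (m : ℕ) (L : ℕ → ℕ) : Prop :=
  (∀ i ∈ Finset.Icc 1 (m - 1), L i + L (i + 1) ∈ Finset.Icc 1 (m - 1)) ∧
  (∀ i ∈ Finset.Icc 1 (m - 1), ∀ j ∈ Finset.Icc 1 (m - 1), i ≠ j →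
      L i + L (i + 1) ≠ L j + L (j + 1)) ∧
  (∑ v ∈ Finset.Icc 1 m, L v = (m * (m - 1) + 3) / 4) ∧
  L m ≤ 1

/-- Base labelings for m = 2, 3, 4, 5. -/
def baseL (b i : ℕ) : ℕ :=
  ([[],[],[0,0,1],[0,0,1,1],[0,0,1,2,0],[0,0,1,1,3,0]].getD b []).getD i 0

/-- Extend a labeling of `P_m` by four more vertices. -/
def extendL (m : ℕ) (L : ℕ → ℕ) (i : ℕ) : ℕ :=
  if i ≤ m then L i
  else if i = m + 1 then m + 1 - L m
  else if i = m + 2 then 2 + L m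
  else if i = m + 3 then m - L m
  else if i = m + 4 then L m
  else 0

lemma extendL_le (m : ℕ) (L : ℕ → ℕ) {i : ℕ} (h : i ≤ m) : extendL m L i = L i := by
  unfold extendL; split_ifs <;> omega

lemma extendL_1 (m : ℕ) (L : ℕ → ℕ) : extendL m L (m + 1) = m + 1 - L m := by
  unfold extendL; split_ifs <;> omega

lemma extendL_2 (m : ℕ) (L : ℕ → ℕ) : extendL m L (m + 2) = 2 + L m := by
  unfold extendL; split_ifs <;> omega

lemma extendL_3 (m : ℕ) (L : ℕ → ℕ) : extendL m L (m + 3) = m - L m := by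
  unfold extendL; split_ifs <;> omega

lemma extendL_4 (m : ℕ) (L : ℕ → ℕ) : extendL m L (m + 4) = L m := by
  unfold extendL; split_ifs <;> omega

lemma pathInv_step (m : ℕ) (hm : 2 ≤ m) (L : ℕ → ℕ) (h : PathInv m L) :
    PathInv (m + 4) (extendL m L) := by
  obtain ⟨hA, hB, hC, hD⟩ := h
  set L' := extendL m L with hL'
  have w0 : ∀ i, 1 ≤ i → i ≤ m - 1 → L' i + L' (i + 1) = L i + L (i + 1) := by
    intro i h1 h2
    rw [hL', extendL_le m L (by omega), extendL_le m L (by omega)]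
  have w1 : L' m + L' (m + 1) = m + 1 := by
    rw [hL', extendL_le m L le_rfl, extendL_1]; omega
  have w2 : L' (m + 1) + L' (m + 2) = m + 3 := by
    rw [hL', extendL_1, extendL_2]; omega
  have w3 : L' (m + 2) + L' (m + 3) = m + 2 := by
    rw [hL', extendL_2, extendL_3]; omega
  have w4 : L' (m + 3) + L' (m + 4) = m := by
    rw [hL', extendL_3, extendL_4]; omega
  -- a characterization of all new weights
  have key : ∀ i, 1 ≤ i → i ≤ m + 3 →
      (i ≤ m - 1 ∧ 1 ≤ L' i + L' (i + 1) ∧ L' i + L' (i + 1) ≤ m - 1 ∧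
        L' i + L' (i + 1) = L i + L (i + 1)) ∨
      (m ≤ i ∧ L' i + L' (i + 1) =
        (if i = m then m + 1 else if i = m + 1 then m + 3
          else if i = m + 2 then m + 2 else m)) := by
    intro i h1 h3
    by_cases hi : i ≤ m - 1
    · left
      have := hA i (Finset.mem_Icc.mpr ⟨h1, hi⟩)
      rw [Finset.mem_Icc] at this
      have hw := w0 i h1 hi
      exact ⟨hi, by omega, by omega, hw⟩
    · right
      have hcase : i = m ∨ i = m + 1 ∨ i = m + 2 ∨ i = m + 3 := by omega
      refine ⟨by omega, ?_⟩
      rcases hcase with rfl | rfl | rfl | rfl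
      · simpa using w1
      · rw [if_neg (by omega), if_pos rfl]
        have : m + 1 + 1 = m + 2 := rfl
        rw [this, w2]
      · rw [if_neg (by omega), if_neg (by omega), if_pos rfl]
        have : m + 2 + 1 = m + 3 := rfl
        rw [this, w3]
      · rw [if_neg (by omega), if_neg (by omega), if_neg (by omega)]
        have : m + 3 + 1 = m + 4 := rfl
        rw [this, w4]
  refine ⟨?_, ?_, ?_, ?_⟩
  · intro i hi
    rw [Finset.mem_Icc] at hi ⊢
    have hi' : 1 ≤ i ∧ i ≤ m + 3 := by omega
    rcases key i hi'.1 hi'.2 with ⟨h1, h2, h3, _⟩ | ⟨h1, h2⟩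
    · omega
    · rw [h2]; split_ifs <;> omega
  · intro i hi j hj hij heq
    rw [Finset.mem_Icc] at hi hj
    have hi4 : i ≤ m + 3 := by omega
    have hj4 : j ≤ m + 3 := by omega
    rcases key i hi.1 hi4 with ⟨hi1, hi2, hi3, hi4'⟩ | ⟨hi1, hi2⟩ <;>
      rcases key j hj.1 hj4 with ⟨hj1, hj2, hj3, hj4'⟩ | ⟨hj1, hj2⟩
    · rw [hi4', hj4'] at heq
      exact hB i (Finset.mem_Icc.mpr ⟨hi.1, hi1⟩) j (Finset.mem_Icc.mpr ⟨hj.1, hj1⟩) hij heq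
    · rw [hj2] at heq; split_ifs at heq <;> omega
    · rw [hi2] at heq; split_ifs at heq <;> omega
    · rw [hi2, hj2] at heq; split_ifs at heq <;> omega
  · have e1 := extendL_1 m L
    have e2 := extendL_2 m L
    have e3 := extendL_3 m L
    have e4 := extendL_4 m L
    have hsplit : ∑ v ∈ Finset.Icc 1 (m + 4), L' v =
        ∑ v ∈ Finset.Icc 1 m, L' v + L' (m + 1) + L' (m + 2) + L' (m + 3) + L' (m + 4) := by
      rw [show m + 4 = (m + 3) + 1 from rfl, Finset.sum_Icc_succ_top (by omega),
        show m + 3 = (m + 2) + 1 from rfl, Finset.sum_Icc_succ_top (by omega),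
        show m + 2 = (m + 1) + 1 from rfl, Finset.sum_Icc_succ_top (by omega),
        show m + 1 = m + 1 from rfl, Finset.sum_Icc_succ_top (by omega)]
    have hcongr : ∑ v ∈ Finset.Icc 1 m, L' v = ∑ v ∈ Finset.Icc 1 m, L v :=
      Finset.sum_congr rfl fun x hx => extendL_le m L (Finset.mem_Icc.mp hx).2
    rw [hsplit, hcongr, hC, hL', e1, e2, e3, e4]
    obtain ⟨n, rfl⟩ : ∃ n, m = n + 2 := ⟨m - 2, by omega⟩
    have h1 : (n + 2) * (n + 2 - 1) = (n + 2) * (n + 1) := rfl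
    have h2 : (n + 2 + 4) * (n + 2 + 4 - 1) = (n + 6) * (n + 5) := by norm_num
    rw [h1, h2]
    have h3 : (n + 6) * (n + 5) + 3 = ((n + 2) * (n + 1) + 3) + (2 * n + 7) * 4 := by ring
    rw [h3, Nat.add_mul_div_right _ _ (by norm_num : (0:ℕ) < 4)]
    omega
  · rw [hL', extendL_4]; exact hD

/-- Repeated extension. -/
def lamRec (b : ℕ) : ℕ → ℕ → ℕ
  | 0 => baseL b
  | (k + 1) => extendL (b + 4 * k) (lamRec b k)

lemma pathInv_lamRec (b : ℕ) (hb : 2 ≤ b) (hbase : PathInv b (baseL b)) :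
    ∀ k, PathInv (b + 4 * k) (lamRec b k) := by
  intro k
  induction k with
  | zero => simpa [lamRec] using hbase
  | succ k ih =>
      have := pathInv_step (b + 4 * k) (by omega) (lamRec b k) ih
      have hk : b + 4 * (k + 1) = b + 4 * k + 4 := by ring
      rw [hk]
      exact this

lemma pair_inj {i j : ℕ} (h : ({i, i + 1} : Finset ℕ) = {j, j + 1}) : i = j := by
  have hi : i ∈ ({j, j + 1} : Finset ℕ) := h ▸ Finset.mem_insert_self i {i + 1}
  have hj : j ∈ ({i, i + 1} : Finset ℕ) := h ▸ Finset.mem_insert_self j {j + 1}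
  simp only [Finset.mem_insert, Finset.mem_singleton] at hi hj
  omega

lemma sum_of_distinct_pos (n : ℕ) : ∀ (S : Finset ℕ), S.card = n → (∀ x ∈ S, 1 ≤ x) →
    n * (n + 1) ≤ 2 * ∑ x ∈ S, x := by
  induction n with
  | zero => intro S _ _; simp
  | succ n ih =>
      intro S hcard hpos
      have hne : S.Nonempty := Finset.card_pos.mp (by omega)
      have hMS : S.max' hne ∈ S := S.max'_mem hne
      have hsub : S ⊆ Finset.Icc 1 (S.max' hne) := fun x hx =>
        Finset.mem_Icc.mpr ⟨hpos x hx, S.le_max' x hx⟩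
      have hM : n + 1 ≤ S.max' hne := by
        have := Finset.card_le_card hsub
        rw [Nat.card_Icc] at this
        omega
      have herase := ih (S.erase (S.max' hne))
        (by rw [Finset.card_erase_of_mem hMS]; omega)
        (fun x hx => hpos x (Finset.mem_of_mem_erase hx))
      have hsum : S.max' hne + ∑ x ∈ S.erase (S.max' hne), x = ∑ x ∈ S, x :=
        Finset.add_sum_erase S id hMS
      nlinarith [herase, hM, hsum]

lemma pathInv_discriminator (m : ℕ) (hm : 2 ≤ m) (L : ℕ → ℕ) (h : PathInv m L) :
    IsEdgeDiscriminator (pathEdges m) L := by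
  obtain ⟨hA, hB, _, _⟩ := h
  constructor
  · intro e he
    obtain ⟨i, hi, rfl⟩ := Finset.mem_image.mp he
    rw [Finset.sum_pair (by omega : i ≠ i + 1)]
    have := hA i hi
    rw [Finset.mem_Icc] at this
    omega
  · intro e he f hf hef
    obtain ⟨i, hi, rfl⟩ := Finset.mem_image.mp he
    obtain ⟨j, hj, rfl⟩ := Finset.mem_image.mp hf
    rw [Finset.sum_pair (by omega : i ≠ i + 1), Finset.sum_pair (by omega : j ≠ j + 1)]
    exact hB i hi j hj (fun hij => hef (by rw [hij]))

/-- The minimum weight of an edge-discriminator on the path `P_m` is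
`⌈m(m-1)/4⌉ = (m(m-1)+3)/4` (natural number division). -/
theorem path_optimum (m : ℕ) (hm : 2 ≤ m) :
    (∃ lam : ℕ → ℕ, IsEdgeDiscriminator (pathEdges m) lam ∧
      ∑ v ∈ Finset.Icc 1 m, lam v = (m * (m - 1) + 3) / 4) ∧
    (∀ lam : ℕ → ℕ, IsEdgeDiscriminator (pathEdges m) lam →
      (m * (m - 1) + 3) / 4 ≤ ∑ v ∈ Finset.Icc 1 m, lam v) := by
  constructor
  · -- existence
    obtain ⟨b, k, hb2, hb5, hmeq⟩ : ∃ b k, 2 ≤ b ∧ b ≤ 5 ∧ m = b + 4 * k :=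
      ⟨2 + (m - 2) % 4, (m - 2) / 4, by omega, by omega, by omega⟩
    have hbase : PathInv b (baseL b) := by
      interval_cases b <;> (unfold PathInv baseL; decide)
    have hinv := pathInv_lamRec b hb2 hbase k
    rw [← hmeq] at hinv
    exact ⟨lamRec b k, pathInv_discriminator m hm _ hinv, hinv.2.2.1⟩
  · -- lower bound
    rintro lam ⟨hpos, hdisc⟩
    set W := ∑ v ∈ Finset.Icc 1 m, lam v with hW
    have hinj : ∀ i ∈ Finset.Icc 1 (m - 1), ∀ j ∈ Finset.Icc 1 (m - 1),
        lam i + lam (i + 1) = lam j + lam (j + 1) → i = j := by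
      intro i hi j hj heq
      by_contra hij
      have hie : ({i, i + 1} : Finset ℕ) ∈ pathEdges m := Finset.mem_image_of_mem _ hi
      have hje : ({j, j + 1} : Finset ℕ) ∈ pathEdges m := Finset.mem_image_of_mem _ hj
      have hne : ({i, i + 1} : Finset ℕ) ≠ {j, j + 1} := fun h => hij (pair_inj h)
      apply hdisc _ hie _ hje hne
      rw [Finset.sum_pair (by omega : i ≠ i + 1), Finset.sum_pair (by omega : j ≠ j + 1), heq]
    set S := (Finset.Icc 1 (m - 1)).image (fun i => lam i + lam (i + 1)) with hS
    have hcard : S.card = m - 1 := by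
      rw [hS, Finset.card_image_of_injOn (fun i hi j hj => hinj i hi j hj), Nat.card_Icc]
      omega
    have hSpos : ∀ x ∈ S, 1 ≤ x := by
      intro x hx
      obtain ⟨i, hi, rfl⟩ := Finset.mem_image.mp hx
      have hie : ({i, i + 1} : Finset ℕ) ∈ pathEdges m := Finset.mem_image_of_mem _ hi
      have := hpos _ hie
      rw [Finset.sum_pair (by omega : i ≠ i + 1)] at this
      omega
    have hbig := sum_of_distinct_pos (m - 1) S hcard hSpos
    have hsumS : ∑ x ∈ S, x = ∑ i ∈ Finset.Icc 1 (m - 1), (lam i + lam (i + 1)) := by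
      rw [hS, Finset.sum_image (fun i hi j hj => hinj i hi j hj)]
    have hsplit : ∑ i ∈ Finset.Icc 1 (m - 1), (lam i + lam (i + 1)) =
        ∑ i ∈ Finset.Icc 1 (m - 1), lam i + ∑ i ∈ Finset.Icc 1 (m - 1), lam (i + 1) :=
      Finset.sum_add_distrib
    have hshift : ∑ i ∈ Finset.Icc 1 (m - 1), lam (i + 1) = ∑ j ∈ Finset.Icc 2 m, lam j := by
      have himg : Finset.image (· + 1) (Finset.Icc 1 (m - 1)) = Finset.Icc 2 m := by
        rw [Finset.image_add_right_Icc, show (1:ℕ) + 1 = 2 from rfl,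
          show m - 1 + 1 = m from by omega]
      rw [← himg, Finset.sum_image (by intro i _ j _ h; dsimp only at h; omega)]
    have hle1 : ∑ i ∈ Finset.Icc 1 (m - 1), lam i ≤ W :=
      Finset.sum_le_sum_of_subset (Finset.Icc_subset_Icc_right (by omega))
    have hle2 : ∑ j ∈ Finset.Icc 2 m, lam j ≤ W :=
      Finset.sum_le_sum_of_subset (Finset.Icc_subset_Icc_left (by omega))
    have hmain : (m - 1) * m ≤ 4 * W := by
      have : (m - 1) * ((m - 1) + 1) = (m - 1) * m := by
        congr 1; omega
      rw [← this]
      calc (m - 1) * ((m - 1) + 1) ≤ 2 * ∑ x ∈ S, x := hbig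
        _ ≤ 4 * W := by rw [hsumS, hsplit, hshift]; omega
    calc (m * (m - 1) + 3) / 4 ≤ (4 * W + 3) / 4 := by
          apply Nat.div_le_div_right
          have : m * (m - 1) = (m - 1) * m := Nat.mul_comm _ _
          omega
      _ = W := by omega
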